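/- arXiv:math/9906002 — 2 statements merged into one kernel-verified Lean document; each statement's English description precedes it below -/
import Mathlib

section
/- Let Z be a subgraph of the ℤ² lattice graph whose dual configuration Z* contains no circuits. Let x and y be nearest neighbors in ℤ² such that the edge ⟨x,y⟩ is absent from Z, and suppose that the connected component of Z* containing the dual edge ⟨x,y⟩* is contained in the box Λ(x,k−1). Then x and y are connected by a path in Z that is contained in the box Λ(x,k) (the path obtained by going clockwise around the outer boundary of that dual component). -/
open MeasureTheory ProbabilityTheory

/-- Vertices of the `ℤ²` lattice. -/
abbrev V2 : Type := ℤ × ℤ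

/-- `L¹` distance on `ℤ²` (also used for dual vertices, in shifted coordinates). -/
def dist1 (x y : V2) : ℕ := (x.1 - y.1).natAbs + (x.2 - y.2).natAbs

/-- Two vertices of `ℤ²` are nearest neighbors iff their `L¹` distance is `1`. -/
def latticeAdj (x y : V2) : Prop := dist1 x y = 1

/-- The edges of the `ℤ²` lattice graph, as unordered pairs of vertices. -/
def latticeEdges : Set (Sym2 V2) := {e | ∃ x y, latticeAdj x y ∧ e = s(x, y)}

/-- The graph on `ℤ²` determined by an edge configuration `Z`:
`x` and `y` are adjacent iff they are nearest neighbors and the edge `⟨x,y⟩` belongs to `Z`. -/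
def graphOf (Z : Set (Sym2 V2)) : SimpleGraph V2 where
  Adj x y := latticeAdj x y ∧ s(x, y) ∈ Z
  symm := by
    constructor
    intro x y h
    refine ⟨?_, ?_⟩
    · have := h.1; unfold latticeAdj dist1 at *; omega
    · rw [Sym2.eq_swap]; exact h.2
  loopless := by
    constructor
    intro x h
    have := h.1; unfold latticeAdj dist1 at this; omega

/-- The connected component of `x` in the configuration `Z` is infinite. -/
def compInfinite (Z : Set (Sym2 V2)) (x : V2) : Prop :=
  {y | (graphOf Z).Reachable x y}.Infinite

/-- `X` is an everywhere percolating subgraph of `ℤ²`: it is a set of lattice edges and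
every vertex lies in an infinite connected component of `X`. -/
def EverywherePercolating (X : Set (Sym2 V2)) : Prop :=
  X ⊆ latticeEdges ∧ ∀ x : V2, compInfinite X x

/-- The dual configuration `Z*`.  A dual vertex `d` stands for the point `d + (1/2, 1/2)` of the
dual lattice `ℤ² + (1/2,1/2)`.  The dual edge joining `(a, b-1)` and `(a, b)` crosses the primal
horizontal edge from `(a, b)` to `(a+1, b)`, and the dual edge joining `(a-1, b)` and `(a, b)`
crosses the primal vertical edge from `(a, b)` to `(a, b+1)`.  A dual edge is present in `Z*`
iff the primal edge crossing it is absent from `Z`. -/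
def dualConfig (Z : Set (Sym2 V2)) : Set (Sym2 V2) :=
  {e | ∃ a b : ℤ,
    (e = s(((a, b - 1) : V2), ((a, b) : V2)) ∧ s(((a, b) : V2), ((a + 1, b) : V2)) ∉ Z) ∨
    (e = s(((a - 1, b) : V2), ((a, b) : V2)) ∧ s(((a, b) : V2), ((a, b + 1) : V2)) ∉ Z)}

/-- The box `Λ(x, m) = x + [-m/2, m/2]²`, as a set of vertices of `ℤ²`. -/
def box (x : V2) (m : ℕ) : Set V2 :=
  {y | 2 * (y.1 - x.1).natAbs ≤ m ∧ 2 * (y.2 - x.2).natAbs ≤ m}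

/-- The dual vertex `d` (representing the point `d + (1/2,1/2)`) lies in the box
`Λ(x, m) = x + [-m/2, m/2]²`. -/
def dualMemBox (x : V2) (m : ℕ) (d : V2) : Prop :=
  (2 * (d.1 - x.1) + 1).natAbs ≤ m ∧ (2 * (d.2 - x.2) + 1).natAbs ≤ m

/-- `B` is a family of independent `{0,1}`-valued random variables, indexed by the (potential)
edges of `ℤ²`, each taking the value `true` with probability `p`. -/
def BernoulliFamily {Ω : Type} [MeasurableSpace Ω] (μ : Measure Ω) (p : ℝ)
    (B : Sym2 V2 → Ω → Bool) : Prop :=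
  (∀ e, Measurable (B e)) ∧
  iIndepFun B μ ∧
  ∀ e, μ {ω | B e ω = true} = ENNReal.ofReal p

/-- The configuration obtained from `X` by `ε`-Bernoulli addition, in the sample point `ω`:
an edge of `ℤ²` is present iff it is in `X` or the corresponding Bernoulli variable is `true`. -/
def addConfig {Ω : Type} (X : Set (Sym2 V2)) (B : Sym2 V2 → Ω → Bool) (ω : Ω) :
    Set (Sym2 V2) :=
  X ∪ {e ∈ latticeEdges | B e ω = true}

/-- The vertex `n • x` of `ℤ²`. -/
def scale (n : ℕ) (x : V2) : V2 := ((n : ℤ) * x.1, (n : ℤ) * x.2)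

/-- `nx` and `ny` are closely connected in the configuration `Z`: there is a path in `Z` from
`nx` to `ny` inside `Λ(nx, n) ∪ Λ(ny, n)`. -/
def CloselyConnected (Z : Set (Sym2 V2)) (n : ℕ) (x y : V2) : Prop :=
  ∃ w : (graphOf Z).Walk (scale n x) (scale n y),
    ∀ v ∈ w.support, v ∈ box (scale n x) n ∪ box (scale n y) n

/-- The renormalized configuration `Z̃ₙ`: the edge `⟨x,y⟩` of `ℤ²` is present iff `nx` and `ny`
are closely connected in `Z`. -/
def renorm (Z : Set (Sym2 V2)) (n : ℕ) : Set (Sym2 V2) :=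
  {e | ∃ x y : V2, latticeAdj x y ∧ e = s(x, y) ∧ CloselyConnected Z n x y}

/-- The dual edge `⟨d,d'⟩` is the edge of the dual lattice crossing the primal edge `⟨x,y⟩`. -/
def crossPair (x y d d' : V2) : Prop :=
  (∃ a b : ℤ, s(x, y) = s(((a, b) : V2), ((a + 1, b) : V2)) ∧
      s(d, d') = s(((a, b - 1) : V2), ((a, b) : V2))) ∨
  (∃ a b : ℤ, s(x, y) = s(((a, b) : V2), ((a, b + 1) : V2)) ∧
      s(d, d') = s(((a - 1, b) : V2), ((a, b) : V2)))

section AuxPathAround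

open SimpleGraph

/-- The four corners of the unit square whose lower-left corner is `u`
(i.e. the face centered at the dual vertex `u`). -/
def cornerSet (u : V2) : Set V2 :=
  {v | (v.1 = u.1 ∨ v.1 = u.1 + 1) ∧ (v.2 = u.2 ∨ v.2 = u.2 + 1)}

/-- Ordered form of the crossing relation between a primal edge `(p₁, p₂)` and the dual
edge `(δ₁, δ₂)` crossing it. -/
def crossE (p₁ p₂ δ₁ δ₂ : V2) : Prop :=
  (∃ a b : ℤ, p₁ = (a, b) ∧ p₂ = (a + 1, b) ∧ δ₁ = (a, b - 1) ∧ δ₂ = (a, b)) ∨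
  (∃ a b : ℤ, p₁ = (a, b) ∧ p₂ = (a, b + 1) ∧ δ₁ = (a - 1, b) ∧ δ₂ = (a, b))

lemma crossE_latticeAdj_prim {p₁ p₂ δ₁ δ₂ : V2} (h : crossE p₁ p₂ δ₁ δ₂) :
    latticeAdj p₁ p₂ := by
  rcases h with ⟨a, b, rfl, rfl, rfl, rfl⟩ | ⟨a, b, rfl, rfl, rfl, rfl⟩ <;>
    (unfold latticeAdj dist1; omega)

lemma crossE_latticeAdj_dual {p₁ p₂ δ₁ δ₂ : V2} (h : crossE p₁ p₂ δ₁ δ₂) :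
    latticeAdj δ₁ δ₂ := by
  rcases h with ⟨a, b, rfl, rfl, rfl, rfl⟩ | ⟨a, b, rfl, rfl, rfl, rfl⟩ <;>
    (unfold latticeAdj dist1; omega)

/-- A flexible form of the membership criterion for vertical dual edges. -/
lemma mem_dual_vert (Z : Set (Sym2 V2)) (a b b' : ℤ) (hb : b' = b - 1) :
    s(((a, b') : V2), ((a, b) : V2)) ∈ dualConfig Z ↔
      s(((a, b) : V2), ((a + 1, b) : V2)) ∉ Z := by
  subst hb
  constructor
  · rintro ⟨a', b', ⟨he, hp⟩ | ⟨he, hp⟩⟩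
    · rw [Sym2.eq_iff] at he
      simp only [Prod.mk.injEq] at he
      obtain ⟨rfl, rfl⟩ : a' = a ∧ b' = b := by omega
      exact hp
    · exfalso
      rw [Sym2.eq_iff] at he
      simp only [Prod.mk.injEq] at he
      omega
  · intro h
    exact ⟨a, b, Or.inl ⟨rfl, h⟩⟩

/-- A flexible form of the membership criterion for horizontal dual edges. -/
lemma mem_dual_horiz (Z : Set (Sym2 V2)) (a b a' b' : ℤ) (ha : a' = a - 1) (hb : b' = b + 1) :
    s(((a', b) : V2), ((a, b) : V2)) ∈ dualConfig Z ↔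
      s(((a, b) : V2), ((a, b') : V2)) ∉ Z := by
  subst ha; subst hb
  constructor
  · rintro ⟨a', b', ⟨he, hp⟩ | ⟨he, hp⟩⟩
    · exfalso
      rw [Sym2.eq_iff] at he
      simp only [Prod.mk.injEq] at he
      omega
    · rw [Sym2.eq_iff] at he
      simp only [Prod.mk.injEq] at he
      obtain ⟨rfl, rfl⟩ : a' = a ∧ b' = b := by omega
      exact hp
  · intro h
    exact ⟨a, b, Or.inr ⟨rfl, h⟩⟩

/-- The dual edge of a given primal edge is unique. -/
lemma crossE_unique {p₁ p₂ δ₁ δ₂ q₁ q₂ ε₁ ε₂ : V2} (h1 : crossE p₁ p₂ δ₁ δ₂)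
    (h2 : crossE q₁ q₂ ε₁ ε₂) (hp : s(p₁, p₂) = s(q₁, q₂)) : s(δ₁, δ₂) = s(ε₁, ε₂) := by
  rcases h1 with ⟨a, b, rfl, rfl, rfl, rfl⟩ | ⟨a, b, rfl, rfl, rfl, rfl⟩ <;>
    rcases h2 with ⟨a', b', rfl, rfl, rfl, rfl⟩ | ⟨a', b', rfl, rfl, rfl, rfl⟩ <;>
      (rw [Sym2.eq_iff] at hp ⊢; simp only [Prod.mk.injEq] at hp ⊢; omega)

/-- The primal edge of a given dual edge is unique. -/
lemma crossE_unique' {p₁ p₂ δ₁ δ₂ q₁ q₂ ε₁ ε₂ : V2} (h1 : crossE p₁ p₂ δ₁ δ₂)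
    (h2 : crossE q₁ q₂ ε₁ ε₂) (hp : s(δ₁, δ₂) = s(ε₁, ε₂)) : s(p₁, p₂) = s(q₁, q₂) := by
  rcases h1 with ⟨a, b, rfl, rfl, rfl, rfl⟩ | ⟨a, b, rfl, rfl, rfl, rfl⟩ <;>
    rcases h2 with ⟨a', b', rfl, rfl, rfl, rfl⟩ | ⟨a', b', rfl, rfl, rfl, rfl⟩ <;>
      (rw [Sym2.eq_iff] at hp ⊢; simp only [Prod.mk.injEq] at hp ⊢; omega)

/-- Membership of a dual edge given via `crossE`. -/
lemma crossE_dual_mem_iff {Z : Set (Sym2 V2)} {p₁ p₂ δ₁ δ₂ : V2} (h : crossE p₁ p₂ δ₁ δ₂) :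
    s(δ₁, δ₂) ∈ dualConfig Z ↔ s(p₁, p₂) ∉ Z := by
  rcases h with ⟨a, b, rfl, rfl, rfl, rfl⟩ | ⟨a, b, rfl, rfl, rfl, rfl⟩
  · exact mem_dual_vert Z a b _ rfl
  · exact mem_dual_horiz Z a b _ _ rfl rfl

/-- Every primal lattice edge has a crossing dual edge. -/
lemma exists_crossE_prim {x y : V2} (h : latticeAdj x y) :
    ∃ q₁ q₂ ε₁ ε₂ : V2, crossE q₁ q₂ ε₁ ε₂ ∧ s(q₁, q₂) = s(x, y) := by
  obtain ⟨x1, x2⟩ := x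
  obtain ⟨y1, y2⟩ := y
  unfold latticeAdj dist1 at h
  simp only at h
  rcases (by omega :
      (y1 = x1 + 1 ∧ y2 = x2) ∨ (x1 = y1 + 1 ∧ x2 = y2) ∨
      (y1 = x1 ∧ y2 = x2 + 1) ∨ (x1 = y1 ∧ x2 = y2 + 1)) with
    hc | hc | hc | hc
  · refine ⟨(x1, x2), (x1 + 1, x2), (x1, x2 - 1), (x1, x2),
      Or.inl ⟨x1, x2, rfl, rfl, rfl, rfl⟩, ?_⟩
    rw [Sym2.eq_iff]; simp only [Prod.mk.injEq, and_true, true_and]; omega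
  · refine ⟨(y1, y2), (y1 + 1, y2), (y1, y2 - 1), (y1, y2),
      Or.inl ⟨y1, y2, rfl, rfl, rfl, rfl⟩, ?_⟩
    rw [Sym2.eq_iff]; simp only [Prod.mk.injEq, and_true, true_and]; omega
  · refine ⟨(x1, x2), (x1, x2 + 1), (x1 - 1, x2), (x1, x2),
      Or.inr ⟨x1, x2, rfl, rfl, rfl, rfl⟩, ?_⟩
    rw [Sym2.eq_iff]; simp only [Prod.mk.injEq, and_true, true_and]; omega
  · refine ⟨(y1, y2), (y1, y2 + 1), (y1 - 1, y2), (y1, y2),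
      Or.inr ⟨y1, y2, rfl, rfl, rfl, rfl⟩, ?_⟩
    rw [Sym2.eq_iff]; simp only [Prod.mk.injEq, and_true, true_and]; omega

/-- Every dual lattice edge is the crossing dual edge of some primal edge. -/
lemma exists_crossE_dual {u w : V2} (h : latticeAdj u w) :
    ∃ q₁ q₂ ε₁ ε₂ : V2, crossE q₁ q₂ ε₁ ε₂ ∧ s(ε₁, ε₂) = s(u, w) := by
  obtain ⟨u1, u2⟩ := u
  obtain ⟨w1, w2⟩ := w
  unfold latticeAdj dist1 at h
  simp only at h
  rcases (by omega :
      (w1 = u1 + 1 ∧ w2 = u2) ∨ (u1 = w1 + 1 ∧ u2 = w2) ∨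
      (w1 = u1 ∧ w2 = u2 + 1) ∨ (u1 = w1 ∧ u2 = w2 + 1)) with
    hc | hc | hc | hc
  · refine ⟨(u1 + 1, u2), (u1 + 1, u2 + 1), (u1 + 1 - 1, u2), (u1 + 1, u2),
      Or.inr ⟨u1 + 1, u2, rfl, rfl, rfl, rfl⟩, ?_⟩
    rw [Sym2.eq_iff]; simp only [Prod.mk.injEq, and_true, true_and]; omega
  · refine ⟨(w1 + 1, w2), (w1 + 1, w2 + 1), (w1 + 1 - 1, w2), (w1 + 1, w2),
      Or.inr ⟨w1 + 1, w2, rfl, rfl, rfl, rfl⟩, ?_⟩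
    rw [Sym2.eq_iff]; simp only [Prod.mk.injEq, and_true, true_and]; omega
  · refine ⟨(u1, u2 + 1), (u1 + 1, u2 + 1), (u1, u2 + 1 - 1), (u1, u2 + 1),
      Or.inl ⟨u1, u2 + 1, rfl, rfl, rfl, rfl⟩, ?_⟩
    rw [Sym2.eq_iff]; simp only [Prod.mk.injEq, and_true, true_and]; omega
  · refine ⟨(w1, w2 + 1), (w1 + 1, w2 + 1), (w1, w2 + 1 - 1), (w1, w2 + 1),
      Or.inl ⟨w1, w2 + 1, rfl, rfl, rfl, rfl⟩, ?_⟩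
    rw [Sym2.eq_iff]; simp only [Prod.mk.injEq, and_true, true_and]; omega

end AuxPathAround
section AuxPathAround2

open SimpleGraph

lemma dualConfig_union {Z : Set (Sym2 V2)} {q₁ q₂ ε₁ ε₂ : V2} (hc : crossE q₁ q₂ ε₁ ε₂) :
    dualConfig (Z ∪ {s(q₁, q₂)}) = dualConfig Z \ {s(ε₁, ε₂)} := by
  ext e
  constructor
  · rintro ⟨a, b, ⟨rfl, hp⟩ | ⟨rfl, hp⟩⟩
    · rw [Set.mem_union, Set.mem_singleton_iff] at hp
      push_neg at hp
      refine ⟨⟨a, b, Or.inl ⟨rfl, hp.1⟩⟩, ?_⟩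
      intro he
      exact hp.2 (crossE_unique' (Or.inl ⟨a, b, rfl, rfl, rfl, rfl⟩) hc he)
    · rw [Set.mem_union, Set.mem_singleton_iff] at hp
      push_neg at hp
      refine ⟨⟨a, b, Or.inr ⟨rfl, hp.1⟩⟩, ?_⟩
      intro he
      exact hp.2 (crossE_unique' (Or.inr ⟨a, b, rfl, rfl, rfl, rfl⟩) hc he)
  · rintro ⟨⟨a, b, ⟨rfl, hp⟩ | ⟨rfl, hp⟩⟩, hne⟩
    · refine ⟨a, b, Or.inl ⟨rfl, ?_⟩⟩
      rw [Set.mem_union, Set.mem_singleton_iff]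
      push_neg
      refine ⟨hp, fun hpe => ?_⟩
      exact hne (crossE_unique (Or.inl ⟨a, b, rfl, rfl, rfl, rfl⟩) hc hpe)
    · refine ⟨a, b, Or.inr ⟨rfl, ?_⟩⟩
      rw [Set.mem_union, Set.mem_singleton_iff]
      push_neg
      refine ⟨hp, fun hpe => ?_⟩
      exact hne (crossE_unique (Or.inr ⟨a, b, rfl, rfl, rfl, rfl⟩) hc hpe)

lemma graphOf_adj {Z : Set (Sym2 V2)} {u v : V2} :
    (graphOf Z).Adj u v ↔ latticeAdj u v ∧ s(u, v) ∈ Z := Iff.rfl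

lemma crossE_dual_adj {Z : Set (Sym2 V2)} {p₁ p₂ δ₁ δ₂ : V2} (hc : crossE p₁ p₂ δ₁ δ₂)
    (hp : s(p₁, p₂) ∉ Z) : (graphOf (dualConfig Z)).Adj δ₁ δ₂ :=
  ⟨crossE_latticeAdj_dual hc, (crossE_dual_mem_iff hc).mpr hp⟩

lemma reachable_of_mem_support {V : Type*} {G : SimpleGraph V} :
    ∀ {a v t : V} (p : G.Walk a v), t ∈ p.support → G.Reachable a t := by
  intro a v t p
  induction p with
  | nil => intro ht; simp only [Walk.support_nil, List.mem_singleton] at ht; subst ht; rfl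
  | cons h q ih =>
    intro ht
    rw [Walk.support_cons, List.mem_cons] at ht
    rcases ht with rfl | ht
    · rfl
    · exact (h.reachable).trans (ih ht)

lemma walk_patch {V : Type*} {G₁ G₂ : SimpleGraph V} {K : Set V}
    (h : ∀ a b, G₁.Adj a b → ∃ w : G₂.Walk a b, ∀ t ∈ w.support, t = a ∨ t = b ∨ t ∈ K) :
    ∀ {a b : V} (p : G₁.Walk a b), ∃ w : G₂.Walk a b, ∀ t ∈ w.support, t ∈ p.support ∨ t ∈ K := by
  intro a b p
  induction p with
  | nil => exact ⟨Walk.nil, by simp⟩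
  | cons h' q ih =>
    obtain ⟨w₁, hw₁⟩ := h _ _ h'
    obtain ⟨w₂, hw₂⟩ := ih
    refine ⟨w₁.append w₂, ?_⟩
    intro t ht
    rw [Walk.mem_support_append_iff] at ht
    rcases ht with ht | ht
    · rcases hw₁ t ht with rfl | rfl | hk
      · exact Or.inl (Walk.start_mem_support _)
      · exact Or.inl (by rw [Walk.support_cons]; exact List.mem_cons_of_mem _ q.start_mem_support)
      · exact Or.inr hk
    · rcases hw₂ t ht with hs | hk
      · exact Or.inl (by rw [Walk.support_cons]; exact List.mem_cons_of_mem _ hs)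
      · exact Or.inr hk

end AuxPathAround2
section AuxPathAround3

open SimpleGraph

/-- In a graph where `u` has the unique incident edge `s(u, w)`, any walk starting at `u`
whose first edge is not `s(u, w)` is impossible; more precisely, any vertex reachable from a
vertex `δ ≠ u` without using the edge `s(u, w)` avoids `u`. -/
lemma comp_remove_leaf {G G' : SimpleGraph V2} {u w δ : V2}
    (hGG' : ∀ a b, G'.Adj a b ↔ G.Adj a b ∧ s(a, b) ≠ s(u, w))
    (huniq : ∀ v, G.Adj u v → v = w) (hδu : δ ≠ u) :
    {v | G'.Reachable δ v} = {v | G.Reachable δ v} \ {u} := by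
  have hle : G' ≤ G := fun a b hab => ((hGG' a b).mp hab).1
  ext v
  simp only [Set.mem_setOf_eq, Set.mem_diff, Set.mem_singleton_iff]
  constructor
  · intro hreach
    refine ⟨hreach.mono hle, ?_⟩
    rintro rfl
    obtain ⟨p⟩ := hreach.symm
    cases p with
    | nil => exact hδu rfl
    | cons h q =>
      rw [hGG'] at h
      exact h.2 (by rw [huniq _ h.1])
  · rintro ⟨hreach, hvu⟩
    obtain ⟨p0⟩ := hreach
    set p : G.Walk δ v := p0.toPath.1 with hp
    have hpath : p.IsPath := p0.toPath.2
    have hu : u ∉ p.support := by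
      intro hus
      have h1 : u ≠ δ := fun h => hδu h.symm
      have h2 : u ≠ v := fun h => hvu h.symm
      set t₁ : G.Walk δ u := p.takeUntil u hus with ht₁
      set t₂ : G.Walk u v := p.dropUntil u hus with ht₂
      -- w occurs in t₁.support
      have hw₁ : w ∈ t₁.support := by
        obtain ⟨c, h', q', hr⟩ := Walk.exists_eq_cons_of_ne h1 t₁.reverse
        have hcw : c = w := huniq _ h'
        have hc1 : c ∈ t₁.reverse.support := by
          rw [hr, Walk.support_cons]
          exact List.mem_cons_of_mem _ q'.start_mem_support
        rw [← hcw]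
        rwa [Walk.support_reverse, List.mem_reverse] at hc1
      -- w occurs in t₂.support.tail
      have hw₂ : w ∈ t₂.support.tail := by
        obtain ⟨c, h', q', hr⟩ := Walk.exists_eq_cons_of_ne h2 t₂
        have hcw : c = w := huniq _ h'
        rw [hr, Walk.support_cons, ← hcw]
        exact q'.start_mem_support
      have hnodup := hpath.support_nodup
      rw [← Walk.take_spec p hus, Walk.support_append, List.nodup_append] at hnodup
      exact hnodup.2.2 w hw₁ w hw₂ rfl
    refine ⟨p.transfer G' ?_⟩
    intro e he
    have heG : e ∈ G.edgeSet := p.edges_subset_edgeSet he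
    induction e using Sym2.ind with
    | _ a b =>
      rw [SimpleGraph.mem_edgeSet] at heG ⊢
      rw [hGG']
      refine ⟨heG, fun habs => ?_⟩
      rw [Sym2.eq_iff] at habs
      rcases habs with ⟨rfl, rfl⟩ | ⟨rfl, rfl⟩
      · exact hu (p.fst_mem_support_of_mem_edges he)
      · exact hu (p.snd_mem_support_of_mem_edges he)

end AuxPathAround3
section AuxPathAround4

open SimpleGraph

lemma exists_leaf {G : SimpleGraph V2} (hac : G.IsAcyclic) {δ₁ δ₂ : V2} (hadj : G.Adj δ₁ δ₂)
    (hfin : {v | G.Reachable δ₁ v}.Finite) {c₀ : V2} (hc₀ : G.Reachable δ₁ c₀)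
    (hc₁ : c₀ ≠ δ₁) (hc₂ : c₀ ≠ δ₂) :
    ∃ u w, G.Reachable δ₁ u ∧ G.Adj u w ∧ (∀ v, G.Adj u v → v = w) ∧ s(u, w) ≠ s(δ₁, δ₂) := by
  classical
  set C := {v | G.Reachable δ₁ v} with hC
  set B := C.ncard with hB
  set P : ℕ → Prop := fun n => ∃ (u : V2) (p : G.Walk u δ₁), p.IsPath ∧ p.length = n with hP
  have hbound : ∀ (u : V2) (p : G.Walk u δ₁), p.IsPath → p.length + 1 ≤ B := by
    intro u p hp
    have hsub : ∀ t ∈ p.support.toFinset, t ∈ hfin.toFinset := by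
      intro t ht
      rw [List.mem_toFinset] at ht
      rw [Set.Finite.mem_toFinset]
      exact reachable_of_mem_support p.reverse
        (by rw [Walk.support_reverse, List.mem_reverse]; exact ht)
    calc p.length + 1 = p.support.toFinset.card := by
          rw [List.toFinset_card_of_nodup hp.support_nodup, Walk.length_support]
      _ ≤ hfin.toFinset.card := Finset.card_le_card hsub
      _ = B := (Set.ncard_eq_toFinset_card C hfin).symm
  have hpath1 : (Walk.cons hadj.symm Walk.nil : G.Walk δ₂ δ₁).IsPath := by
    rw [Walk.cons_isPath_iff]
    exact ⟨Walk.IsPath.nil, by simp [hadj.ne']⟩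
  have hP1 : P 1 := ⟨δ₂, Walk.cons hadj.symm Walk.nil, hpath1, rfl⟩
  have h1B : 1 ≤ B := by
    have := hbound δ₂ (Walk.cons hadj.symm Walk.nil) hpath1
    simp only [Walk.length_cons, Walk.length_nil] at this
    omega
  set m := Nat.findGreatest P B with hmdef
  have hm : P m := Nat.findGreatest_spec h1B hP1
  have hm1 : 1 ≤ m := Nat.le_findGreatest h1B hP1
  -- a maximal path cannot both start and end at δ₁
  have start_ne : ∀ (u : V2) (p : G.Walk u δ₁), p.IsPath → p.length = m → u ≠ δ₁ := by
    intro u p hp hlen h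
    subst h
    cases p with
    | nil => simp only [Walk.length_nil] at hlen; omega
    | cons h q =>
      rw [Walk.cons_isPath_iff] at hp
      exact hp.2 q.end_mem_support
  -- a maximal path's start vertex has a unique neighbor, namely its second vertex
  have key : ∀ (u : V2) (p : G.Walk u δ₁), p.IsPath → p.length = m →
      ∃ c : V2, G.Adj u c ∧ ∀ v, G.Adj u v → v = c := by
    intro u p hp hlen
    have hne : u ≠ δ₁ := start_ne u p hp hlen
    obtain ⟨c, h₀, p', hr⟩ := Walk.exists_eq_cons_of_ne hne p
    have hp' : p'.IsPath ∧ u ∉ p'.support := by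
      rw [hr, Walk.cons_isPath_iff] at hp; exact hp
    refine ⟨c, h₀, fun v hv => ?_⟩
    by_cases hvs : v ∈ p.support
    · have hvne : v ≠ u := hv.ne'
      have hvp' : v ∈ p'.support := by
        rw [hr, Walk.support_cons, List.mem_cons] at hvs
        rcases hvs with rfl | hvs
        · exact absurd rfl hvne
        · exact hvs
      set q₀ := p'.dropUntil v hvp' with hq₀def
      have hq₀ : q₀.IsPath := hp'.1.dropUntil hvp'
      have hq : (Walk.cons hv q₀).IsPath := by
        rw [Walk.cons_isPath_iff]
        exact ⟨hq₀, fun hus => hp'.2 (Walk.support_dropUntil_subset _ hvp' hus)⟩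
      have hpq := hac.path_unique ⟨p, hp⟩ ⟨Walk.cons hv q₀, hq⟩
      have h2 := congrArg (fun r : G.Path u δ₁ => (r : G.Walk u δ₁).getVert 1) hpq
      simp only at h2
      rw [hr] at h2
      rw [Walk.getVert_cons_succ, Walk.getVert_cons_succ, Walk.getVert_zero,
        Walk.getVert_zero] at h2
      exact h2.symm
    · exfalso
      have hq : (Walk.cons hv.symm p).IsPath := by
        rw [Walk.cons_isPath_iff]; exact ⟨hp, hvs⟩
      have hb := hbound v (Walk.cons hv.symm p) hq
      rw [Walk.length_cons] at hb
      have hgr : ¬ P (m + 1) :=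
        Nat.findGreatest_is_greatest (P := P) (n := B) (by omega) (by omega)
      exact hgr ⟨v, Walk.cons hv.symm p, hq, by rw [Walk.length_cons, hlen]⟩
  obtain ⟨u, p, hp, hlen⟩ := hm
  obtain ⟨c, hc, huniq⟩ := key u p hp hlen
  have hreach_u : G.Reachable δ₁ u :=
    reachable_of_mem_support p.reverse p.reverse.end_mem_support
  by_cases hedge : s(u, c) = s(δ₁, δ₂)
  · -- the maximal path is the single edge from δ₂ to δ₁; use c₀ instead
    rw [Sym2.eq_iff] at hedge
    rcases hedge with ⟨h1, h2⟩ | ⟨h1, h2⟩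
    · exact absurd h1 (start_ne _ p hp hlen)
    · -- u = δ₂, c = δ₁; show m = 1
      obtain rfl := h1.symm
      obtain rfl := h2.symm
      have hm1' : m = 1 := by
        have hpq := hac.path_unique ⟨p, hp⟩ ⟨Walk.cons hadj.symm Walk.nil, hpath1⟩
        have h2 := congrArg (fun r : G.Path δ₂ δ₁ => (r : G.Walk δ₂ δ₁).length) hpq
        simp only [Walk.length_cons, Walk.length_nil] at h2
        omega
      obtain ⟨r0⟩ := hc₀.symm
      set r : G.Walk c₀ δ₁ := (r0.toPath : G.Path c₀ δ₁).1 with hrdef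
      have hrp : r.IsPath := r0.toPath.2
      have hr1 : 1 ≤ r.length := by
        rcases Nat.eq_zero_or_pos r.length with h0 | h1
        · exact absurd (Walk.eq_of_length_eq_zero h0) hc₁
        · exact h1
      have hrle : r.length ≤ m :=
        Nat.le_findGreatest (by have := hbound c₀ r hrp; omega) ⟨c₀, r, hrp, rfl⟩
      have hrm : r.length = m := by omega
      obtain ⟨c', hc', huniq'⟩ := key c₀ r hrp hrm
      refine ⟨c₀, c', hc₀, hc', huniq', ?_⟩
      intro h
      rw [Sym2.eq_iff] at h
      rcases h with ⟨h, -⟩ | ⟨h, -⟩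
      · exact hc₁ h
      · exact hc₂ h
  · exact ⟨u, c, hreach_u, hc, huniq, hedge⟩

end AuxPathAround4
section AuxPathAround5

open SimpleGraph

lemma mkpair_eq {a b c d : ℤ} (h1 : a = c) (h2 : b = d) : ((a, b) : V2) = (c, d) := by
  subst h1; subst h2; rfl

/-- If every dual edge at `u` is the edge `s(ε₁,ε₂)`, then any other primal edge on the
boundary of the face `u` is present in `Z`. -/
lemma side_in_Z {Z : Set (Sym2 V2)} {ε₁ ε₂ u r₁ r₂ σ₁ σ₂ : V2}
    (hleaf : ∀ v, (graphOf (dualConfig Z)).Adj u v → s(u, v) = s(ε₁, ε₂))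
    (hcr : crossE r₁ r₂ σ₁ σ₂) (huσ : u = σ₁ ∨ u = σ₂)
    (hne : s(σ₁, σ₂) ≠ s(ε₁, ε₂)) : s(r₁, r₂) ∈ Z := by
  by_contra hns
  have hdadj : (graphOf (dualConfig Z)).Adj σ₁ σ₂ := crossE_dual_adj hcr hns
  rcases huσ with h | h
  · obtain rfl := h.symm
    exact hne (hleaf _ hdadj)
  · obtain rfl := h.symm
    exact hne ((Sym2.eq_swap).trans (hleaf _ hdadj.symm))

lemma detour {Z : Set (Sym2 V2)} {q₁ q₂ ε₁ ε₂ u : V2} (hc : crossE q₁ q₂ ε₁ ε₂)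
    (hu : u = ε₁ ∨ u = ε₂)
    (hleaf : ∀ v, (graphOf (dualConfig Z)).Adj u v → s(u, v) = s(ε₁, ε₂)) :
    ∃ w : (graphOf Z).Walk q₁ q₂, ∀ t ∈ w.support, t ∈ cornerSet u := by
  have hnedge : ∀ {c₁ c₂ c₃ c₄ : V2}, s(c₁, c₂) = s(c₃, c₄) →
      (c₁ = c₃ ∧ c₂ = c₄) ∨ (c₁ = c₄ ∧ c₂ = c₃) := fun h => Sym2.eq_iff.mp h
  rcases hc with ⟨a, b, rfl, rfl, rfl, rfl⟩ | ⟨a, b, rfl, rfl, rfl, rfl⟩ <;>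
    rcases hu with h | h <;> obtain rfl := h
  · -- vertical dual edge, face below
    have s1 : s(((a, b - 1) : V2), ((a, b) : V2)) ∈ Z :=
      side_in_Z (σ₁ := (a - 1, b - 1)) (σ₂ := (a, b - 1)) hleaf
        (Or.inr ⟨a, b - 1, rfl, mkpair_eq rfl (by ring), mkpair_eq rfl rfl, rfl⟩) (Or.inr rfl)
        (by intro h; rcases hnedge h with ⟨h1, h2⟩ | ⟨h1, h2⟩ <;>
          (simp only [Prod.mk.injEq] at h1 h2; omega))
    have s2 : s(((a, b - 1) : V2), ((a + 1, b - 1) : V2)) ∈ Z :=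
      side_in_Z (σ₁ := (a, b - 2)) (σ₂ := (a, b - 1)) hleaf
        (Or.inl ⟨a, b - 1, rfl, rfl, mkpair_eq rfl (by ring), rfl⟩) (Or.inr rfl)
        (by intro h; rcases hnedge h with ⟨h1, h2⟩ | ⟨h1, h2⟩ <;>
          (simp only [Prod.mk.injEq] at h1 h2; omega))
    have s3 : s(((a + 1, b - 1) : V2), ((a + 1, b) : V2)) ∈ Z :=
      side_in_Z (σ₁ := (a, b - 1)) (σ₂ := (a + 1, b - 1)) hleaf
        (Or.inr ⟨a + 1, b - 1, rfl, mkpair_eq rfl (by ring), mkpair_eq (by ring) rfl, rfl⟩) (Or.inl rfl)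
        (by intro h; rcases hnedge h with ⟨h1, h2⟩ | ⟨h1, h2⟩ <;>
          (simp only [Prod.mk.injEq] at h1 h2; omega))
    refine ⟨Walk.cons ⟨by unfold latticeAdj dist1; omega, by rwa [Sym2.eq_swap]⟩
      (Walk.cons ⟨by unfold latticeAdj dist1; omega, s2⟩
      (Walk.cons ⟨by unfold latticeAdj dist1; omega, s3⟩ Walk.nil)), ?_⟩
    intro t ht
    simp only [Walk.support, Walk.support_cons, Walk.support_nil, List.mem_cons,
      List.not_mem_nil, or_false, List.mem_singleton] at ht
    rcases ht with rfl | rfl | rfl | rfl <;> refine ⟨?_, ?_⟩ <;> simp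
  · -- vertical dual edge, face above
    have s1 : s(((a, b) : V2), ((a, b + 1) : V2)) ∈ Z :=
      side_in_Z (σ₁ := (a - 1, b)) (σ₂ := (a, b)) hleaf
        (Or.inr ⟨a, b, rfl, rfl, rfl, rfl⟩) (Or.inr rfl)
        (by intro h; rcases hnedge h with ⟨h1, h2⟩ | ⟨h1, h2⟩ <;>
          (simp only [Prod.mk.injEq] at h1 h2; omega))
    have s2 : s(((a, b + 1) : V2), ((a + 1, b + 1) : V2)) ∈ Z :=
      side_in_Z (σ₁ := (a, b)) (σ₂ := (a, b + 1)) hleaf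
        (Or.inl ⟨a, b + 1, rfl, rfl, mkpair_eq rfl (by ring), rfl⟩) (Or.inl rfl)
        (by intro h; rcases hnedge h with ⟨h1, h2⟩ | ⟨h1, h2⟩ <;>
          (simp only [Prod.mk.injEq] at h1 h2; omega))
    have s3 : s(((a + 1, b) : V2), ((a + 1, b + 1) : V2)) ∈ Z :=
      side_in_Z (σ₁ := (a, b)) (σ₂ := (a + 1, b)) hleaf
        (Or.inr ⟨a + 1, b, rfl, rfl, mkpair_eq (by ring) rfl, rfl⟩) (Or.inl rfl)
        (by intro h; rcases hnedge h with ⟨h1, h2⟩ | ⟨h1, h2⟩ <;>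
          (simp only [Prod.mk.injEq] at h1 h2; omega))
    refine ⟨Walk.cons ⟨by unfold latticeAdj dist1; omega, s1⟩
      (Walk.cons ⟨by unfold latticeAdj dist1; omega, s2⟩
      (Walk.cons ⟨by unfold latticeAdj dist1; omega, by rwa [Sym2.eq_swap]⟩ Walk.nil)), ?_⟩
    intro t ht
    simp only [Walk.support, Walk.support_cons, Walk.support_nil, List.mem_cons,
      List.not_mem_nil, or_false, List.mem_singleton] at ht
    rcases ht with rfl | rfl | rfl | rfl <;> refine ⟨?_, ?_⟩ <;> simp
  · -- horizontal dual edge, face on the left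
    have s1 : s(((a - 1, b) : V2), ((a, b) : V2)) ∈ Z :=
      side_in_Z (σ₁ := (a - 1, b - 1)) (σ₂ := (a - 1, b)) hleaf
        (Or.inl ⟨a - 1, b, rfl, mkpair_eq (by ring) rfl, rfl, rfl⟩) (Or.inr rfl)
        (by intro h; rcases hnedge h with ⟨h1, h2⟩ | ⟨h1, h2⟩ <;>
          (simp only [Prod.mk.injEq] at h1 h2; omega))
    have s2 : s(((a - 1, b) : V2), ((a - 1, b + 1) : V2)) ∈ Z :=
      side_in_Z (σ₁ := (a - 2, b)) (σ₂ := (a - 1, b)) hleaf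
        (Or.inr ⟨a - 1, b, rfl, rfl, mkpair_eq (by ring) rfl, rfl⟩) (Or.inr rfl)
        (by intro h; rcases hnedge h with ⟨h1, h2⟩ | ⟨h1, h2⟩ <;>
          (simp only [Prod.mk.injEq] at h1 h2; omega))
    have s3 : s(((a - 1, b + 1) : V2), ((a, b + 1) : V2)) ∈ Z :=
      side_in_Z (σ₁ := (a - 1, b)) (σ₂ := (a - 1, b + 1)) hleaf
        (Or.inl ⟨a - 1, b + 1, rfl, mkpair_eq (by ring) rfl, mkpair_eq rfl (by ring), rfl⟩) (Or.inl rfl)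
        (by intro h; rcases hnedge h with ⟨h1, h2⟩ | ⟨h1, h2⟩ <;>
          (simp only [Prod.mk.injEq] at h1 h2; omega))
    refine ⟨Walk.cons ⟨by unfold latticeAdj dist1; omega, by rwa [Sym2.eq_swap]⟩
      (Walk.cons ⟨by unfold latticeAdj dist1; omega, s2⟩
      (Walk.cons ⟨by unfold latticeAdj dist1; omega, s3⟩ Walk.nil)), ?_⟩
    intro t ht
    simp only [Walk.support, Walk.support_cons, Walk.support_nil, List.mem_cons,
      List.not_mem_nil, or_false, List.mem_singleton] at ht
    rcases ht with rfl | rfl | rfl | rfl <;> refine ⟨?_, ?_⟩ <;> simp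
  · -- horizontal dual edge, face on the right
    have s1 : s(((a, b) : V2), ((a + 1, b) : V2)) ∈ Z :=
      side_in_Z (σ₁ := (a, b - 1)) (σ₂ := (a, b)) hleaf
        (Or.inl ⟨a, b, rfl, rfl, rfl, rfl⟩) (Or.inr rfl)
        (by intro h; rcases hnedge h with ⟨h1, h2⟩ | ⟨h1, h2⟩ <;>
          (simp only [Prod.mk.injEq] at h1 h2; omega))
    have s2 : s(((a + 1, b) : V2), ((a + 1, b + 1) : V2)) ∈ Z :=
      side_in_Z (σ₁ := (a, b)) (σ₂ := (a + 1, b)) hleaf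
        (Or.inr ⟨a + 1, b, rfl, rfl, mkpair_eq (by ring) rfl, rfl⟩) (Or.inl rfl)
        (by intro h; rcases hnedge h with ⟨h1, h2⟩ | ⟨h1, h2⟩ <;>
          (simp only [Prod.mk.injEq] at h1 h2; omega))
    have s3 : s(((a, b + 1) : V2), ((a + 1, b + 1) : V2)) ∈ Z :=
      side_in_Z (σ₁ := (a, b)) (σ₂ := (a, b + 1)) hleaf
        (Or.inl ⟨a, b + 1, rfl, rfl, mkpair_eq rfl (by ring), rfl⟩) (Or.inl rfl)
        (by intro h; rcases hnedge h with ⟨h1, h2⟩ | ⟨h1, h2⟩ <;>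
          (simp only [Prod.mk.injEq] at h1 h2; omega))
    refine ⟨Walk.cons ⟨by unfold latticeAdj dist1; omega, s1⟩
      (Walk.cons ⟨by unfold latticeAdj dist1; omega, s2⟩
      (Walk.cons ⟨by unfold latticeAdj dist1; omega, by rwa [Sym2.eq_swap]⟩ Walk.nil)), ?_⟩
    intro t ht
    simp only [Walk.support, Walk.support_cons, Walk.support_nil, List.mem_cons,
      List.not_mem_nil, or_false, List.mem_singleton] at ht
    rcases ht with rfl | rfl | rfl | rfl <;> refine ⟨?_, ?_⟩ <;> simp

end AuxPathAround5
section AuxPathAround6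

open SimpleGraph

/-- The core induction: if the dual component of the dual edge crossing an absent primal edge
`s(p₁,p₂)` is finite (and the dual configuration is acyclic), then `p₁` and `p₂` are joined by
a walk in `Z` whose vertices are corners of faces of that dual component. -/
lemma core_walk : ∀ (n : ℕ) (Z : Set (Sym2 V2)), (graphOf (dualConfig Z)).IsAcyclic →
    ∀ p₁ p₂ δ₁ δ₂ : V2, crossE p₁ p₂ δ₁ δ₂ → s(p₁, p₂) ∉ Z →
    {v | (graphOf (dualConfig Z)).Reachable δ₁ v}.Finite →
    {v | (graphOf (dualConfig Z)).Reachable δ₁ v}.ncard ≤ n →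
    ∃ w : (graphOf Z).Walk p₁ p₂, ∀ t ∈ w.support,
      ∃ u : V2, (graphOf (dualConfig Z)).Reachable δ₁ u ∧ t ∈ cornerSet u := by
  intro n
  induction n with
  | zero =>
    intro Z _ p₁ p₂ δ₁ δ₂ _ _ hfin hcard
    exfalso
    have h1 : δ₁ ∈ {v | (graphOf (dualConfig Z)).Reachable δ₁ v} := Reachable.refl δ₁
    have := (Set.ncard_pos hfin).mpr ⟨δ₁, h1⟩
    omega
  | succ n ih =>
    intro Z hac p₁ p₂ δ₁ δ₂ hc hp hfin hcard
    set G := graphOf (dualConfig Z) with hGdef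
    have hδ : G.Adj δ₁ δ₂ := crossE_dual_adj hc hp
    by_cases hsmall : ∀ v, G.Reachable δ₁ v → v = δ₁ ∨ v = δ₂
    · -- base case: the component is just {δ₁, δ₂}
      have hleaf : ∀ v, G.Adj δ₁ v → s(δ₁, v) = s(δ₁, δ₂) := by
        intro v hv
        rcases hsmall v hv.reachable with rfl | rfl
        · exact absurd rfl hv.ne
        · rfl
      obtain ⟨w, hw⟩ := detour hc (Or.inl rfl) hleaf
      exact ⟨w, fun t ht => ⟨δ₁, Reachable.refl δ₁, hw t ht⟩⟩
    · push_neg at hsmall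
      obtain ⟨c₀, hc₀, hc₀'⟩ := hsmall
      obtain ⟨u, w, huR, huw, huniq, hne⟩ := exists_leaf hac hδ hfin hc₀ hc₀'.1 hc₀'.2
      -- the primal edge crossing the leaf dual edge s(u,w)
      obtain ⟨q₁, q₂, ε₁, ε₂, hcq, hεq⟩ := exists_crossE_dual huw.1
      have hud : u = ε₁ ∨ u = ε₂ := by
        rcases Sym2.eq_iff.mp hεq with ⟨h1, h2⟩ | ⟨h1, h2⟩
        · exact Or.inl h1.symm
        · exact Or.inr h2.symm
      have hfZ : s(q₁, q₂) ∉ Z := by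
        have : s(ε₁, ε₂) ∈ dualConfig Z := by rw [hεq]; exact huw.2
        exact (crossE_dual_mem_iff hcq).mp this
      set Z' := Z ∪ {s(q₁, q₂)} with hZ'def
      have hdc : dualConfig Z' = dualConfig Z \ {s(ε₁, ε₂)} := dualConfig_union hcq
      set G' := graphOf (dualConfig Z') with hG'def
      have hG' : ∀ a b, G'.Adj a b ↔ G.Adj a b ∧ s(a, b) ≠ s(u, w) := by
        intro a b
        rw [hG'def, hGdef, graphOf_adj, graphOf_adj, hdc, ← hεq, Set.mem_diff,
          Set.mem_singleton_iff]
        tauto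
      have hle : G' ≤ G := fun a b hab => ((hG' a b).mp hab).1
      have hac' : G'.IsAcyclic := fun v c hcyc => hac (c.mapLe hle) (hcyc.mapLe hle)
      have hδ₁u : δ₁ ≠ u := by
        rintro rfl
        exact hne (congrArg (fun z => s(δ₁, z)) (huniq δ₂ hδ)).symm
      have hcomp : {v | G'.Reachable δ₁ v} = {v | G.Reachable δ₁ v} \ {u} :=
        comp_remove_leaf hG' huniq hδ₁u
      have hp' : s(p₁, p₂) ∉ Z' := by
        rw [hZ'def, Set.mem_union, Set.mem_singleton_iff]
        push_neg
        refine ⟨hp, fun habs => ?_⟩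
        exact hne ((crossE_unique hc hcq habs).trans hεq).symm
      have hfin' : {v | G'.Reachable δ₁ v}.Finite := by
        rw [hcomp]; exact hfin.diff
      have hcard' : {v | G'.Reachable δ₁ v}.ncard ≤ n := by
        rw [hcomp]
        have := Set.ncard_diff_singleton_lt_of_mem (show u ∈ {v | G.Reachable δ₁ v} from huR) hfin
        omega
      obtain ⟨w', hw'⟩ := ih Z' hac' p₁ p₂ δ₁ δ₂ hc hp' hfin' hcard'
      -- patch the walk: replace every use of the added edge by a detour around the face u
      have hleaf : ∀ v, G.Adj u v → s(u, v) = s(ε₁, ε₂) := by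
        intro v hv
        rw [huniq v hv]
        exact hεq.symm
      obtain ⟨D, hD⟩ := detour hcq hud hleaf
      have hpatch : ∀ a b : V2, (graphOf Z').Adj a b →
          ∃ wab : (graphOf Z).Walk a b, ∀ t ∈ wab.support, t = a ∨ t = b ∨ t ∈ cornerSet u := by
        intro a b hab
        obtain ⟨hl, hm⟩ := hab
        rw [hZ'def, Set.mem_union, Set.mem_singleton_iff] at hm
        rcases hm with hm | hm
        · refine ⟨Walk.cons ⟨hl, hm⟩ Walk.nil, ?_⟩
          intro t ht
          simp only [Walk.support, Walk.support_cons, Walk.support_nil, List.mem_cons,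
            List.not_mem_nil, or_false, List.mem_singleton] at ht
          tauto
        · rcases Sym2.eq_iff.mp hm with ⟨rfl, rfl⟩ | ⟨rfl, rfl⟩
          · exact ⟨D, fun t ht => Or.inr (Or.inr (hD t ht))⟩
          · refine ⟨D.reverse, fun t ht => Or.inr (Or.inr (hD t ?_))⟩
            rwa [Walk.support_reverse, List.mem_reverse] at ht
      obtain ⟨W, hW⟩ := walk_patch hpatch w'
      refine ⟨W, fun t ht => ?_⟩
      rcases hW t ht with hs | hk
      · obtain ⟨u', hu', hcor⟩ := hw' t hs
        exact ⟨u', hu'.mono hle, hcor⟩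
      · exact ⟨u, huR, hk⟩

end AuxPathAround6
/-- Let `Z` be a subgraph of `ℤ²` whose dual `Z*` contains no circuits, let
`x, y` be nearest neighbors with `⟨x,y⟩ ∉ Z`, and suppose the connected component of `Z*`
containing the dual edge `⟨x,y⟩*` is contained in the box `Λ(x, k-1)`.  Then `x` and `y` are
connected by a path in `Z` contained in the box `Λ(x, k)`. -/
theorem path_around_dual_component (Z : Set (Sym2 V2)) (hZ : Z ⊆ latticeEdges)
    (hacyclic : (graphOf (dualConfig Z)).IsAcyclic)
    (x y : V2) (hadj : latticeAdj x y) (habs : s(x, y) ∉ Z) (k : ℕ)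
    (hbox : ∀ d d' : V2, crossPair x y d d' →
      ∀ d'' : V2, (graphOf (dualConfig Z)).Reachable d d'' → dualMemBox x (k - 1) d'') :
    ∃ w : (graphOf Z).Walk x y, ∀ v ∈ w.support, v ∈ box x k := by
  classical
  obtain ⟨q₁, q₂, ε₁, ε₂, hc, hq⟩ := exists_crossE_prim hadj
  have habs' : s(q₁, q₂) ∉ Z := by rwa [hq]
  have hcp : crossPair x y ε₁ ε₂ := by
    rcases hc with ⟨a, b, h1, h2, h3, h4⟩ | ⟨a, b, h1, h2, h3, h4⟩
    · exact Or.inl ⟨a, b, by rw [← hq, h1, h2], by rw [h3, h4]⟩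
    · exact Or.inr ⟨a, b, by rw [← hq, h1, h2], by rw [h3, h4]⟩
  have hsub : ∀ d'', (graphOf (dualConfig Z)).Reachable ε₁ d'' → dualMemBox x (k - 1) d'' :=
    hbox ε₁ ε₂ hcp
  have hfin : {v | (graphOf (dualConfig Z)).Reachable ε₁ v}.Finite := by
    apply Set.Finite.subset
      (Set.Finite.prod (Set.finite_Icc (x.1 - (k : ℤ)) (x.1 + (k : ℤ)))
        (Set.finite_Icc (x.2 - (k : ℤ)) (x.2 + (k : ℤ))))
    intro d hd
    obtain ⟨h1, h2⟩ := hsub d hd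
    simp only [Set.mem_prod, Set.mem_Icc]
    omega
  have corner : ∀ t u : V2, dualMemBox x (k - 1) u → t ∈ cornerSet u → t ∈ box x k := by
    intro t u h1 h2
    obtain ⟨ha, hb⟩ := h2
    obtain ⟨hA, hB⟩ := h1
    rcases ha with ha | ha <;> rcases hb with hb | hb <;> exact ⟨by omega, by omega⟩
  obtain ⟨W, hW⟩ := core_walk _ Z hacyclic q₁ q₂ ε₁ ε₂ hc habs' hfin le_rfl
  rcases Sym2.eq_iff.mp hq with ⟨h1, h2⟩ | ⟨h1, h2⟩
  · subst h1; subst h2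
    refine ⟨W, fun v hv => ?_⟩
    obtain ⟨u, huR, hcor⟩ := hW v hv
    exact corner v u (hsub u huR) hcor
  · subst h1; subst h2
    refine ⟨W.reverse, fun v hv => ?_⟩
    rw [SimpleGraph.Walk.support_reverse, List.mem_reverse] at hv
    obtain ⟨u, huR, hcor⟩ := hW v hv
    exact corner v u (hsub u huR) hcor
end

section
/- Let X be a fixed everywhere percolating subgraph of ℤ², let ε ∈ (0,1), and let Y = Y(X,ε) be obtained from X by ε-Bernoulli addition. Then almost surely every connected component of the dual configuration Y* is finite; hence Y* is almost surely a forest consisting of finite trees. -/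
open MeasureTheory ProbabilityTheory
open scoped ENNReal

namespace DualForest

lemma latticeAdj_iff {u v : V2} : latticeAdj u v ↔
    (u.1 = v.1 ∧ (u.2 = v.2 + 1 ∨ v.2 = u.2 + 1)) ∨
    (u.2 = v.2 ∧ (u.1 = v.1 + 1 ∨ v.1 = u.1 + 1)) := by
  unfold latticeAdj dist1; omega

lemma pair_eq_iff {x y z w : V2} : s(x, y) = s(z, w) ↔
    (x.1 = z.1 ∧ x.2 = z.2 ∧ y.1 = w.1 ∧ y.2 = w.2) ∨
    (x.1 = w.1 ∧ x.2 = w.2 ∧ y.1 = z.1 ∧ y.2 = z.2) := by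
  rw [Sym2.eq_iff, Prod.ext_iff, Prod.ext_iff, Prod.ext_iff, Prod.ext_iff]
  tauto

def crossPair (u v : V2) : Sym2 V2 :=
  if u.1 = v.1 then s(((u.1, max u.2 v.2) : V2), ((u.1 + 1, max u.2 v.2) : V2))
  else s(((max u.1 v.1, min u.2 v.2) : V2), ((max u.1 v.1, min u.2 v.2 + 1) : V2))

lemma crossPair_comm (u v : V2) : crossPair u v = crossPair v u := by
  unfold crossPair
  rcases eq_or_ne u.1 v.1 with h | h
  · rw [if_pos h, if_pos h.symm, h, max_comm]
  · rw [if_neg h, if_neg (Ne.symm h), max_comm, min_comm]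

def cross : Sym2 V2 → Sym2 V2 := Sym2.lift ⟨crossPair, crossPair_comm⟩

@[simp] lemma cross_mk (u v : V2) : cross s(u, v) = crossPair u v := rfl

lemma cross_vert (a b : ℤ) :
    cross s(((a, b - 1) : V2), ((a, b) : V2)) = s(((a, b) : V2), ((a + 1, b) : V2)) := by
  rw [cross_mk]; unfold crossPair
  rw [if_pos rfl]
  norm_num

lemma cross_horiz (a b : ℤ) :
    cross s(((a - 1, b) : V2), ((a, b) : V2)) = s(((a, b) : V2), ((a, b + 1) : V2)) := by
  rw [cross_mk]; unfold crossPair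
  rw [if_neg (by norm_num : ¬ ((a:ℤ) - 1 = a))]
  norm_num

lemma mem_dualConfig_vert {Z : Set (Sym2 V2)} {a b : ℤ} :
    s(((a, b - 1) : V2), ((a, b) : V2)) ∈ dualConfig Z ↔
      s(((a, b) : V2), ((a + 1, b) : V2)) ∉ Z := by
  constructor
  · rintro ⟨a', b', (⟨he, hz⟩ | ⟨he, hz⟩)⟩
    · rw [pair_eq_iff] at he
      simp only at he
      have : a' = a ∧ b' = b := by omega
      rw [this.1, this.2] at hz; exact hz
    · rw [pair_eq_iff] at he
      simp only at he
      omega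
  · intro h; exact ⟨a, b, Or.inl ⟨rfl, h⟩⟩

lemma mem_dualConfig_horiz {Z : Set (Sym2 V2)} {a b : ℤ} :
    s(((a - 1, b) : V2), ((a, b) : V2)) ∈ dualConfig Z ↔
      s(((a, b) : V2), ((a, b + 1) : V2)) ∉ Z := by
  constructor
  · rintro ⟨a', b', (⟨he, hz⟩ | ⟨he, hz⟩)⟩
    · rw [pair_eq_iff] at he
      simp only at he
      omega
    · rw [pair_eq_iff] at he
      simp only at he
      have : a' = a ∧ b' = b := by omega
      rw [this.1, this.2] at hz; exact hz
  · intro h; exact ⟨a, b, Or.inr ⟨rfl, h⟩⟩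

lemma dual_edge_shape {u v : V2} (h : latticeAdj u v) :
    (∃ a b : ℤ, s(u, v) = s(((a, b - 1) : V2), ((a, b) : V2))) ∨
    (∃ a b : ℤ, s(u, v) = s(((a - 1, b) : V2), ((a, b) : V2))) := by
  rcases latticeAdj_iff.1 h with ⟨h1, h2 | h2⟩ | ⟨h1, h2 | h2⟩
  · exact Or.inl ⟨u.1, u.2, by rw [pair_eq_iff]; dsimp only; omega⟩
  · exact Or.inl ⟨u.1, v.2, by rw [pair_eq_iff]; dsimp only; omega⟩
  · exact Or.inr ⟨u.1, u.2, by rw [pair_eq_iff]; dsimp only; omega⟩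
  · exact Or.inr ⟨v.1, u.2, by rw [pair_eq_iff]; dsimp only; omega⟩

lemma cross_inj {u v u' v' : V2} (h : latticeAdj u v) (h' : latticeAdj u' v')
    (hc : cross s(u, v) = cross s(u', v')) : s(u, v) = s(u', v') := by
  rcases dual_edge_shape h with ⟨a, b, e⟩ | ⟨a, b, e⟩ <;>
    rcases dual_edge_shape h' with ⟨a', b', e'⟩ | ⟨a', b', e'⟩ <;>
      rw [e, e'] at hc ⊢
  · rw [cross_vert, cross_vert, pair_eq_iff] at hc
    rw [pair_eq_iff]; dsimp only at hc ⊢; omega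
  · rw [cross_vert, cross_horiz, pair_eq_iff] at hc
    dsimp only at hc; omega
  · rw [cross_horiz, cross_vert, pair_eq_iff] at hc
    dsimp only at hc; omega
  · rw [cross_horiz, cross_horiz, pair_eq_iff] at hc
    rw [pair_eq_iff]; dsimp only at hc ⊢; omega

end DualForest

namespace DualForest

open SimpleGraph

lemma zmod2_add_self : ∀ x : ZMod 2, x + x = 0 := by decide

lemma zmod2_eq_of_add_eq_zero : ∀ {x y : ZMod 2}, x + y = 0 → x = y := by decide

lemma zmod2_cases : ∀ x : ZMod 2, x = 0 ∨ x = 1 := by decide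

def chiPair (p q : ℤ) (u v : V2) : ZMod 2 :=
  if u.1 = v.1 ∧ max u.2 v.2 = q ∧ p ≤ u.1 then 1 else 0

lemma chiPair_comm (p q : ℤ) (u v : V2) : chiPair p q u v = chiPair p q v u := by
  unfold chiPair
  by_cases h : u.1 = v.1
  · refine if_congr ?_ rfl rfl
    rw [max_comm, h]
  · rw [if_neg (by tauto), if_neg (by rw [eq_comm] at h; tauto)]

def chi (p q : ℤ) : Sym2 V2 → ZMod 2 := Sym2.lift ⟨chiPair p q, chiPair_comm p q⟩

@[simp] lemma chi_mk (p q : ℤ) (u v : V2) : chi p q s(u, v) = chiPair p q u v := rfl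

variable {G : SimpleGraph V2}

def esum (φ : Sym2 V2 → ZMod 2) {a b : V2} (w : G.Walk a b) : ZMod 2 :=
  (w.edges.map φ).sum

lemma esum_nil {a : V2} : esum (G := G) φ (Walk.nil' a) = 0 := rfl

lemma esum_cons {a c b : V2} (h : G.Adj a c) (w : G.Walk c b) :
    esum φ (Walk.cons h w) = φ s(a, c) + esum φ w := by
  unfold esum
  rw [Walk.edges_cons, List.map_cons, List.sum_cons]

lemma esum_telescope (φ : Sym2 V2 → ZMod 2) (g : V2 → ZMod 2) {a b : V2} (w : G.Walk a b)
    (h : ∀ u v, G.Adj u v → u ∈ w.support → v ∈ w.support → φ s(u, v) = g u + g v) :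
    esum φ w = g a + g b := by
  induction w with
  | nil => exact (esum_nil).trans (zmod2_add_self _).symm
  | @cons a c b hadj p ih =>
    rw [esum_cons]
    rw [h a c hadj (by simp) (by simp [Walk.support_cons])]
    rw [ih (fun u v huv hu hv =>
      h u v huv (by simp [Walk.support_cons, hu]) (by simp [Walk.support_cons, hv]))]
    have h2 := zmod2_add_self (g c)
    linear_combination h2

lemma esum_add (φ ψ : Sym2 V2 → ZMod 2) {a b : V2} (w : G.Walk a b) :
    esum (fun e => φ e + ψ e) w = esum φ w + esum ψ w := by
  unfold esum
  induction w.edges with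
  | nil => simp
  | cons x l ih => simp [ih]; ring

lemma esum_count (e0 : Sym2 V2) {a b : V2} (w : G.Walk a b) :
    esum (fun e => if e = e0 then (1 : ZMod 2) else 0) w = (w.edges.count e0 : ZMod 2) := by
  unfold esum
  induction w.edges with
  | nil => simp
  | cons x l ih =>
    rw [List.map_cons, List.sum_cons, ih, List.count_cons]
    by_cases h : x = e0
    · simp [h]; ring
    · simp [h, Ne.symm h]

lemma esum_zero {a b : V2} (w : G.Walk a b) (φ : Sym2 V2 → ZMod 2)
    (h : ∀ u v, G.Adj u v → u ∈ w.support → v ∈ w.support → φ s(u, v) = 0) :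
    esum φ w = 0 := by
  have := esum_telescope φ (fun _ => 0) w (by intro u v h1 h2 h3; rw [h u v h1 h2 h3]; simp)
  simpa using this

end DualForest

namespace DualForest

open SimpleGraph

def gV (p q : ℤ) (u : V2) : ZMod 2 := if u.2 = q ∧ p ≤ u.1 then 1 else 0

lemma flipV_edge (p q : ℤ) {u v : V2} (h : latticeAdj u v) :
    chi p q s(u, v) + chi p (q + 1) s(u, v)
      + (if s(u, v) = s(((p - 1, q) : V2), ((p, q) : V2)) then 1 else 0)
    = gV p q u + gV p q v := by
  have hpe : (s(u, v) = s(((p - 1, q) : V2), ((p, q) : V2))) =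
      ((u.1 = p - 1 ∧ u.2 = q ∧ v.1 = p ∧ v.2 = q) ∨
       (u.1 = p ∧ u.2 = q ∧ v.1 = p - 1 ∧ v.2 = q)) := by
    rw [pair_eq_iff]
  rw [chi_mk, chi_mk]; simp only [hpe]; unfold chiPair gV
  rcases latticeAdj_iff.1 h with ⟨h1, h2 | h2⟩ | ⟨h1, h2 | h2⟩
  · rw [max_eq_left (by omega : v.2 ≤ u.2)]
    split_ifs <;> first | decide | (exfalso; omega)
  · rw [max_eq_right (by omega : u.2 ≤ v.2)]
    split_ifs <;> first | decide | (exfalso; omega)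
  · rw [show max u.2 v.2 = u.2 by omega]
    split_ifs <;> first | decide | (exfalso; omega)
  · rw [show max u.2 v.2 = u.2 by omega]
    split_ifs <;> first | decide | (exfalso; omega)

lemma flipH_edge (p q : ℤ) {u v : V2} (h : latticeAdj u v) :
    chi p q s(u, v) + chi (p + 1) q s(u, v)
      + (if s(u, v) = s(((p, q - 1) : V2), ((p, q) : V2)) then 1 else 0)
    = 0 := by
  have hpe : (s(u, v) = s(((p, q - 1) : V2), ((p, q) : V2))) =
      ((u.1 = p ∧ u.2 = q - 1 ∧ v.1 = p ∧ v.2 = q) ∨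
       (u.1 = p ∧ u.2 = q ∧ v.1 = p ∧ v.2 = q - 1)) := by
    rw [pair_eq_iff]
  rw [chi_mk, chi_mk]; simp only [hpe]; unfold chiPair
  rcases latticeAdj_iff.1 h with ⟨h1, h2 | h2⟩ | ⟨h1, h2 | h2⟩
  · rw [max_eq_left (by omega : v.2 ≤ u.2)]
    split_ifs <;> first | decide | (exfalso; omega)
  · rw [max_eq_right (by omega : u.2 ≤ v.2)]
    split_ifs <;> first | decide | (exfalso; omega)
  · rw [show max u.2 v.2 = u.2 by omega]
    split_ifs <;> first | decide | (exfalso; omega)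
  · rw [show max u.2 v.2 = u.2 by omega]
    split_ifs <;> first | decide | (exfalso; omega)

variable {Z : Set (Sym2 V2)} {d : V2}

lemma flipV_walk (c : (graphOf (dualConfig Z)).Walk d d) (p q : ℤ) :
    esum (chi p q) c + esum (chi p (q + 1)) c
      = (c.edges.count s(((p - 1, q) : V2), ((p, q) : V2)) : ZMod 2) := by
  have h := esum_telescope
    (fun e => chi p q e + (chi p (q + 1) e
        + if e = s(((p - 1, q) : V2), ((p, q) : V2)) then 1 else 0))
    (gV p q) c
    (fun u v huv _ _ => by linear_combination flipV_edge p q huv.1)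
  rw [esum_add, esum_add, esum_count] at h
  rw [zmod2_add_self (gV p q d)] at h
  have hc := zmod2_add_self ((c.edges.count s(((p - 1, q) : V2), ((p, q) : V2)) : ZMod 2))
  linear_combination h - hc

lemma flipH_walk (c : (graphOf (dualConfig Z)).Walk d d) (p q : ℤ) :
    esum (chi p q) c + esum (chi (p + 1) q) c
      = (c.edges.count s(((p, q - 1) : V2), ((p, q) : V2)) : ZMod 2) := by
  have h := esum_telescope
    (fun e => chi p q e + (chi (p + 1) q e
        + if e = s(((p, q - 1) : V2), ((p, q) : V2)) then 1 else 0))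
    (fun _ => 0) c
    (fun u v huv _ _ => by linear_combination flipH_edge p q huv.1)
  rw [esum_add, esum_add, esum_count] at h
  simp only [add_zero] at h
  have hc := zmod2_add_self ((c.edges.count s(((p, q - 1) : V2), ((p, q) : V2)) : ZMod 2))
  linear_combination h - hc

lemma esum_chi_far_right (c : (graphOf (dualConfig Z)).Walk d d) {K : ℕ}
    (hK : ∀ z ∈ c.support, z.1.natAbs ≤ K ∧ z.2.natAbs ≤ K) {p q : ℤ}
    (hp : (K : ℤ) < p) : esum (chi p q) c = 0 := by
  refine esum_zero c _ (fun u v huv hu hv => ?_)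
  have h1 := hK u hu
  rw [chi_mk]; unfold chiPair
  rw [if_neg (by omega)]

lemma esum_chi_high (c : (graphOf (dualConfig Z)).Walk d d) {K : ℕ}
    (hK : ∀ z ∈ c.support, z.1.natAbs ≤ K ∧ z.2.natAbs ≤ K) {p q : ℤ}
    (hq : (K : ℤ) < q ∨ q < -(K : ℤ)) : esum (chi p q) c = 0 := by
  refine esum_zero c _ (fun u v huv hu hv => ?_)
  have h1 := hK u hu
  have h2 := hK v hv
  rw [chi_mk]; unfold chiPair
  rcases max_choice u.2 v.2 with h | h <;> rw [h] <;> rw [if_neg (by omega)]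

lemma esum_chi_far_left (c : (graphOf (dualConfig Z)).Walk d d) {K : ℕ}
    (hK : ∀ z ∈ c.support, z.1.natAbs ≤ K ∧ z.2.natAbs ≤ K) {p q : ℤ}
    (hp : p < -(K : ℤ)) : esum (chi p q) c = 0 := by
  have key : ∀ u v : V2, (graphOf (dualConfig Z)).Adj u v → u ∈ c.support → v ∈ c.support →
      chi p q s(u, v) = (if q ≤ u.2 then (1 : ZMod 2) else 0) + (if q ≤ v.2 then 1 else 0) := by
    intro u v huv hu hv
    have h1 := hK u hu
    have h2 := hK v hv
    rw [chi_mk]; unfold chiPair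
    rcases latticeAdj_iff.1 huv.1 with ⟨ha1, ha2 | ha2⟩ | ⟨ha1, ha2 | ha2⟩
    · rw [max_eq_left (by omega : v.2 ≤ u.2)]
      split_ifs <;> first | decide | (exfalso; omega)
    · rw [max_eq_right (by omega : u.2 ≤ v.2)]
      split_ifs <;> first | decide | (exfalso; omega)
    · rw [show max u.2 v.2 = u.2 by omega]
      split_ifs <;> first | decide | (exfalso; omega)
    · rw [show max u.2 v.2 = u.2 by omega]
      split_ifs <;> first | decide | (exfalso; omega)
  have h := esum_telescope (chi p q) (fun u : V2 => if q ≤ u.2 then 1 else 0) c key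
  rw [h]
  exact zmod2_add_self _

theorem dual_acyclic {Z : Set (Sym2 V2)} (hZ : ∀ x : V2, compInfinite Z x) :
    (graphOf (dualConfig Z)).IsAcyclic := by
  classical
  intro d c hc
  set K : ℕ := (c.support.map (fun z : V2 => z.1.natAbs + z.2.natAbs)).sum with hKdef
  have hK : ∀ z ∈ c.support, z.1.natAbs ≤ K ∧ z.2.natAbs ≤ K := by
    intro z hz
    have : z.1.natAbs + z.2.natAbs ≤ K := by
      refine List.single_le_sum (fun x _ => Nat.zero_le x) _ ?_
      exact List.mem_map_of_mem hz
    omega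
  set N : V2 → ZMod 2 := fun v => esum (chi v.1 v.2) c with hNdef
  -- membership in edges implies dual edge present
  have hedge : ∀ e ∈ c.edges, e ∈ dualConfig Z := by
    intro e he
    have := c.edges_subset_edgeSet he
    induction e using Sym2.ind with
    | _ u v => exact ((SimpleGraph.mem_edgeSet _).1 this).2
  -- N is constant along Z-walks
  have hcount0 : ∀ a b : ℤ, s(((a, b) : V2), ((a + 1, b) : V2)) ∈ Z →
      (c.edges.count s(((a, b - 1) : V2), ((a, b) : V2)) : ZMod 2) = 0 := by
    intro a b hmem
    rw [List.count_eq_zero.2 ?_, Nat.cast_zero]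
    intro hin
    exact (mem_dualConfig_vert.1 (hedge _ hin)) hmem
  have hcount0' : ∀ a b : ℤ, s(((a, b) : V2), ((a, b + 1) : V2)) ∈ Z →
      (c.edges.count s(((a - 1, b) : V2), ((a, b) : V2)) : ZMod 2) = 0 := by
    intro a b hmem
    rw [List.count_eq_zero.2 ?_, Nat.cast_zero]
    intro hin
    exact (mem_dualConfig_horiz.1 (hedge _ hin)) hmem
  have hconst : ∀ x y : V2, (graphOf Z).Walk x y → N x = N y := by
    intro x y w
    induction w with
    | nil => rfl
    | @cons x z y hadj p ih =>
      refine Eq.trans ?_ ih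
      obtain ⟨hl, hmem⟩ := hadj
      rcases latticeAdj_iff.1 hl with ⟨h1, h2 | h2⟩ | ⟨h1, h2 | h2⟩
      · -- x = (z.1, z.2 + 1), i.e. z is below x
        have hx : x = (z.1, z.2 + 1) := Prod.ext_iff.2 ⟨h1, h2⟩
        have hflip := flipV_walk c z.1 z.2
        rw [hcount0' z.1 z.2 ?_] at hflip
        · rw [hx]
          exact (zmod2_eq_of_add_eq_zero hflip).symm
        · rw [show s(((z.1, z.2) : V2), ((z.1, z.2 + 1) : V2)) = s(x, z) by
            rw [hx, Sym2.eq_swap]]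
          exact hmem
      · -- z = (x.1, x.2 + 1)
        have hz : z = (x.1, x.2 + 1) := Prod.ext_iff.2 ⟨h1.symm, h2⟩
        have hflip := flipV_walk c x.1 x.2
        rw [hcount0' x.1 x.2 ?_] at hflip
        · rw [hz]
          exact zmod2_eq_of_add_eq_zero hflip
        · rw [show s(((x.1, x.2) : V2), ((x.1, x.2 + 1) : V2)) = s(x, z) by rw [hz]]
          exact hmem
      · -- x = (z.1 + 1, z.2)
        have hx : x = (z.1 + 1, z.2) := Prod.ext_iff.2 ⟨h2, h1⟩
        have hflip := flipH_walk c z.1 z.2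
        rw [hcount0 z.1 z.2 ?_] at hflip
        · rw [hx]
          exact (zmod2_eq_of_add_eq_zero hflip).symm
        · rw [show s(((z.1, z.2) : V2), ((z.1 + 1, z.2) : V2)) = s(x, z) by
            rw [hx, Sym2.eq_swap]]
          exact hmem
      · -- z = (x.1 + 1, x.2)
        have hz : z = (x.1 + 1, x.2) := Prod.ext_iff.2 ⟨h2, h1.symm⟩
        have hflip := flipH_walk c x.1 x.2
        rw [hcount0 x.1 x.2 ?_] at hflip
        · rw [hz]
          exact zmod2_eq_of_add_eq_zero hflip
        · rw [show s(((x.1, x.2) : V2), ((x.1 + 1, x.2) : V2)) = s(x, z) by rw [hz]]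
          exact hmem
  -- there is a vertex with odd winding
  have hne : c.edges ≠ [] := by
    have h3 := hc.three_le_length
    intro h
    rw [← Walk.length_edges, h] at h3
    simp at h3
  obtain ⟨e0, he0⟩ : ∃ e0, e0 ∈ c.edges := ⟨c.edges.head hne, List.head_mem hne⟩
  have hodd : ∃ v0 : V2, N v0 = 1 := by
    have hadj := c.edges_subset_edgeSet he0
    induction e0 using Sym2.ind with
    | _ u v =>
      have hladj : latticeAdj u v := ((SimpleGraph.mem_edgeSet _).1 hadj).1
      have hcnt : (c.edges.count s(u, v) : ZMod 2) = 1 := by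
        rw [List.count_eq_one_of_mem hc.edges_nodup he0, Nat.cast_one]
      rcases dual_edge_shape hladj with ⟨a, b, he⟩ | ⟨a, b, he⟩
      · -- vertical dual edge, counted in flipH at (a, b)
        have hflip := flipH_walk c a b
        rw [← he, hcnt] at hflip
        rcases zmod2_cases (N (a, b)) with h | h
        · refine ⟨(a + 1, b), ?_⟩
          have : N (a, b) + N (a + 1, b) = 1 := hflip
          rw [h, zero_add] at this
          exact this
        · exact ⟨(a, b), h⟩
      · have hflip := flipV_walk c a b
        rw [← he, hcnt] at hflip
        rcases zmod2_cases (N (a, b)) with h | h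
        · refine ⟨(a, b + 1), ?_⟩
          have : N (a, b) + N (a, b + 1) = 1 := hflip
          rw [h, zero_add] at this
          exact this
        · exact ⟨(a, b), h⟩
  obtain ⟨v0, hv0⟩ := hodd
  -- the Z-component of v0 is finite: contradiction
  have hsub : {y | (graphOf Z).Reachable v0 y} ⊆
      Set.Icc ((-(K : ℤ) - 1, -(K : ℤ) - 1) : V2) (((K : ℤ) + 1, (K : ℤ) + 1) : V2) := by
    intro y hy
    have hNy : N y = 1 := by
      obtain ⟨w⟩ := hy
      rw [← hconst v0 y w]; exact hv0
    by_contra hout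
    rw [Set.mem_Icc, Prod.mk_le_mk, Prod.mk_le_mk] at hout
    have hzero : N y = 0 := by
      have : ((K : ℤ) < y.1 ∨ (K : ℤ) < y.2 ∨ y.2 < -(K : ℤ) ∨ y.1 < -(K : ℤ)) := by omega
      rcases this with h | h | h | h
      · exact esum_chi_far_right c hK h
      · exact esum_chi_high c hK (Or.inl h)
      · exact esum_chi_high c hK (Or.inr h)
      · exact esum_chi_far_left c hK h
    rw [hNy] at hzero
    exact absurd hzero (by decide)
  exact hZ v0 ((Set.finite_Icc _ _).subset hsub)

end DualForest

namespace DualForest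

open SimpleGraph

lemma graphOf_mono {Z Z' : Set (Sym2 V2)} (h : Z ⊆ Z') : graphOf Z ≤ graphOf Z' :=
  fun _ _ hA => ⟨hA.1, h hA.2⟩

lemma dualConfig_anti {Z Z' : Set (Sym2 V2)} (h : Z ⊆ Z') : dualConfig Z' ⊆ dualConfig Z := by
  rintro e ⟨a, b, hcase⟩
  refine ⟨a, b, ?_⟩
  rcases hcase with ⟨he, hz⟩ | ⟨he, hz⟩
  · exact Or.inl ⟨he, fun hs => hz (h hs)⟩
  · exact Or.inr ⟨he, fun hs => hz (h hs)⟩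

lemma dist1_triangle (a b c : V2) : dist1 a c ≤ dist1 a b + dist1 b c := by
  unfold dist1; omega

lemma dist1_self (a : V2) : dist1 a a = 0 := by unfold dist1; omega

lemma dist1_le_length {G : SimpleGraph V2} (hG : ∀ u v, G.Adj u v → latticeAdj u v)
    {a b : V2} (w : G.Walk a b) : dist1 a b ≤ w.length := by
  induction w with
  | nil => rw [dist1_self]; omega
  | @cons a c b hadj p ih =>
    have h1 : latticeAdj a c := hG _ _ hadj
    have h2 := dist1_triangle a c b
    unfold latticeAdj at h1
    rw [Walk.length_cons]
    omega

lemma exists_dist_eq {G : SimpleGraph V2} (hG : ∀ u v, G.Adj u v → latticeAdj u v)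
    {a b : V2} (w : G.Walk a b) (d : V2) (n : ℕ) (ha : dist1 d a ≤ n) (hb : n ≤ dist1 d b) :
    ∃ v ∈ w.support, dist1 d v = n := by
  induction w with
  | nil => exact ⟨_, by simp, le_antisymm ha hb⟩
  | @cons a c b hadj p ih =>
    by_cases h : dist1 d a = n
    · exact ⟨a, by simp, h⟩
    · have h1 : latticeAdj a c := hG _ _ hadj
      have h2 : dist1 d c ≤ n := by
        have := dist1_triangle d a c
        unfold latticeAdj at h1
        omega
      obtain ⟨v, hv1, hv2⟩ := ih h2 hb
      exact ⟨v, by simp [Walk.support_cons, hv1], hv2⟩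

lemma B_false_of_dual_edge {Ω : Type} {X : Set (Sym2 V2)} {B : Sym2 V2 → Ω → Bool} {ω : Ω}
    {u v : V2} (hl : latticeAdj u v) (hd : s(u, v) ∈ dualConfig (addConfig X B ω)) :
    B (cross s(u, v)) ω = false := by
  rcases dual_edge_shape hl with ⟨a, b, he⟩ | ⟨a, b, he⟩
  · rw [he] at hd ⊢
    rw [cross_vert]
    have hnot := mem_dualConfig_vert.1 hd
    by_contra hB
    refine hnot (Or.inr ⟨⟨(a, b), (a + 1, b), ?_, rfl⟩, ?_⟩)
    · unfold latticeAdj dist1; dsimp only; omega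
    · revert hB; cases (B s(((a, b) : V2), ((a + 1, b) : V2)) ω) <;> simp
  · rw [he] at hd ⊢
    rw [cross_horiz]
    have hnot := mem_dualConfig_horiz.1 hd
    by_contra hB
    refine hnot (Or.inr ⟨⟨(a, b), (a, b + 1), ?_, rfl⟩, ?_⟩)
    · unfold latticeAdj dist1; dsimp only; omega
    · revert hB; cases (B s(((a, b) : V2), ((a, b + 1) : V2)) ω) <;> simp

lemma edges_mapLe {G G' : SimpleGraph V2} (h : G ≤ G') {a b : V2} (p : G.Walk a b) :
    (p.mapLe h).edges = p.edges := by
  unfold SimpleGraph.Walk.mapLe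
  rw [SimpleGraph.Walk.edges_map]
  have h2 : Sym2.map ⇑(SimpleGraph.Hom.ofLE h) = id := by
    funext e
    induction e using Sym2.ind with
    | _ u v =>
      simp only [Sym2.map_pair_eq, Sym2.eq_iff, id_eq]
      exact Or.inl ⟨rfl, rfl⟩
  rw [h2, List.map_id]

end DualForest

namespace DualForest

open SimpleGraph

section Prob

variable {Ω : Type} [MeasurableSpace Ω] {μ : Measure Ω} [IsProbabilityMeasure μ]
variable {X : Set (Sym2 V2)} {B : Sym2 V2 → Ω → Bool} {ε : ℝ}

lemma hBprob_false (hB : BernoulliFamily μ ε B) (hε : ε ∈ Set.Ioo (0:ℝ) 1) (e : Sym2 V2) :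
    μ {ω | B e ω = false} = ENNReal.ofReal (1 - ε) := by
  have hmeas : MeasurableSet {ω | B e ω = true} := hB.1 e (measurableSet_singleton true)
  have h1 : {ω | B e ω = false} = {ω | B e ω = true}ᶜ := by
    ext ω; simp [Bool.not_eq_true]
  rw [h1, prob_compl_eq_one_sub hmeas, hB.2.2 e,
    ENNReal.ofReal_sub 1 hε.1.le, ENNReal.ofReal_one]

lemma pair_bound (hB : BernoulliFamily μ ε B) (hε : ε ∈ Set.Ioo (0:ℝ) 1)
    (hXacyc : (graphOf (dualConfig X)).IsAcyclic)
    (dv y' : V2) (n : ℕ) (hdist : dist1 dv y' = n) :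
    μ {ω | (graphOf (dualConfig (addConfig X B ω))).Reachable dv y'}
      ≤ ENNReal.ofReal (1 - ε) ^ n := by
  classical
  set r := ENNReal.ofReal (1 - ε) with hr
  have hle : ∀ ω, graphOf (dualConfig (addConfig X B ω)) ≤ graphOf (dualConfig X) :=
    fun ω => graphOf_mono (dualConfig_anti Set.subset_union_left)
  by_cases hreach : (graphOf (dualConfig X)).Reachable dv y'
  · obtain ⟨w0⟩ := hreach
    set P : (graphOf (dualConfig X)).Path dv y' := w0.toPath with hP
    have hadjP : ∀ e ∈ P.1.edges, e ∈ (graphOf (dualConfig X)).edgeSet :=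
      fun e he => P.1.edges_subset_edgeSet he
    have hlenP : n ≤ P.1.edges.length := by
      rw [Walk.length_edges]
      exact hdist ▸ dist1_le_length (fun u v (h : (graphOf (dualConfig X)).Adj u v) => h.1) P.1
    have hmapnodup : (P.1.edges.map cross).Nodup := by
      refine P.2.edges_nodup.map_on ?_
      intro e1 h1 e2 h2 hc
      induction e1 using Sym2.ind with
      | _ u1 v1 =>
        induction e2 using Sym2.ind with
        | _ u2 v2 =>
          exact cross_inj ((mem_edgeSet _).1 (hadjP _ h1)).1
            ((mem_edgeSet _).1 (hadjP _ h2)).1 hc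
    set s : Finset (Sym2 V2) := (P.1.edges.map cross).toFinset with hs
    have hcard : n ≤ s.card := by
      rw [hs, List.toFinset_card_of_nodup hmapnodup, List.length_map]
      exact hlenP
    have hsub2 : {ω | (graphOf (dualConfig (addConfig X B ω))).Reachable dv y'} ⊆
        ⋂ e' ∈ s, {ω | B e' ω = false} := by
      intro ω hω
      obtain ⟨wY⟩ := hω
      have hQpath : (wY.toPath.1.mapLe (hle ω)).IsPath :=
        (Walk.mapLe_isPath (hle ω)).2 wY.toPath.2
      have hPQ : (⟨wY.toPath.1.mapLe (hle ω), hQpath⟩ :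
          (graphOf (dualConfig X)).Path dv y') = P :=
        isAcyclic_iff_path_unique.1 hXacyc _ P
      simp only [Set.mem_iInter]
      intro e' he'
      rw [hs, List.mem_toFinset] at he'
      obtain ⟨e, heL, rfl⟩ := List.mem_map.1 he'
      have heQ : e ∈ wY.toPath.1.edges := by
        have h3 : P.1.edges = wY.toPath.1.edges := by
          rw [← hPQ]
          exact edges_mapLe (hle ω) wY.toPath.1
        rw [← h3]; exact heL
      have hmem := wY.toPath.1.edges_subset_edgeSet heQ
      induction e using Sym2.ind with
      | _ u v =>
        have hA := (mem_edgeSet _).1 hmem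
        exact B_false_of_dual_edge hA.1 hA.2
    calc μ {ω | (graphOf (dualConfig (addConfig X B ω))).Reachable dv y'}
        ≤ μ (⋂ e' ∈ s, {ω | B e' ω = false}) := measure_mono hsub2
      _ = ∏ e' ∈ s, μ {ω | B e' ω = false} :=
          hB.2.1.meas_biInter (fun i _ => ⟨{false}, measurableSet_singleton false, rfl⟩)
      _ = r ^ s.card := by
          rw [Finset.prod_congr rfl (fun e' _ => hBprob_false hB hε e'), Finset.prod_const]
      _ ≤ r ^ n := pow_le_pow_of_le_one zero_le
          (by rw [hr]; exact ENNReal.ofReal_le_one.2 (by linarith [hε.1])) hcard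
  · have hempty : {ω | (graphOf (dualConfig (addConfig X B ω))).Reachable dv y'} = ∅ := by
      ext ω
      simp only [Set.mem_setOf_eq, Set.mem_empty_iff_false, iff_false]
      intro h
      exact hreach (h.mono (hle ω))
    rw [hempty]; simp

end Prob

end DualForest

namespace DualForest

open SimpleGraph Filter

section Prob2

variable {Ω : Type} [MeasurableSpace Ω] {μ : Measure Ω} [IsProbabilityMeasure μ]
variable {X : Set (Sym2 V2)} {B : Sym2 V2 → Ω → Bool} {ε : ℝ}

lemma tendsto_aux (hε : ε ∈ Set.Ioo (0:ℝ) 1) :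
    Tendsto (fun n : ℕ => ((((2*n+1) * (2*n+1) : ℕ)) : ℝ≥0∞) * ENNReal.ofReal (1 - ε) ^ n)
      atTop (nhds 0) := by
  have hs0 : (0:ℝ) ≤ 1 - ε := by linarith [hε.2]
  have hs1 : 1 - ε < 1 := by linarith [hε.1]
  have hnorm : ‖1 - ε‖ < 1 := by rw [Real.norm_eq_abs, abs_of_nonneg hs0]; exact hs1
  have hS2 : Summable (fun n : ℕ => (n:ℝ)^2 * (1-ε)^n) :=
    summable_pow_mul_geometric_of_norm_lt_one 2 hnorm
  have hS1 : Summable (fun n : ℕ => (n:ℝ)^1 * (1-ε)^n) :=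
    summable_pow_mul_geometric_of_norm_lt_one 1 hnorm
  have hS0 : Summable (fun n : ℕ => (1-ε)^n) := summable_geometric_of_lt_one hs0 hs1
  have hsum : Summable (fun n : ℕ => ((((2*n+1) * (2*n+1) : ℕ)) : ℝ) * (1-ε)^n) := by
    refine (((hS2.mul_left 4).add (hS1.mul_left 4)).add hS0).congr (fun n => ?_)
    push_cast
    ring
  have hreal := hsum.tendsto_atTop_zero
  have h2 := ENNReal.tendsto_ofReal hreal
  rw [ENNReal.ofReal_zero] at h2
  refine h2.congr (fun n => ?_)
  rw [ENNReal.ofReal_mul (by positivity), ENNReal.ofReal_natCast, ENNReal.ofReal_pow hs0]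

lemma comp_null (hB : BernoulliFamily μ ε B) (hε : ε ∈ Set.Ioo (0:ℝ) 1)
    (hXacyc : (graphOf (dualConfig X)).IsAcyclic) (dv : V2) :
    μ {ω | {d' | (graphOf (dualConfig (addConfig X B ω))).Reachable dv d'}.Infinite} = 0 := by
  classical
  set r := ENNReal.ofReal (1 - ε) with hr
  have hbound : ∀ n : ℕ,
      μ {ω | {d' | (graphOf (dualConfig (addConfig X B ω))).Reachable dv d'}.Infinite}
        ≤ ((((2*n+1) * (2*n+1) : ℕ)) : ℝ≥0∞) * r ^ n := by
    intro n
    set T : Finset V2 := ((Finset.Icc (-(n:ℤ)) (n:ℤ)) ×ˢ (Finset.Icc (-(n:ℤ)) (n:ℤ))).image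
        (fun z : V2 => (dv.1 + z.1, dv.2 + z.2)) with hT
    set T' : Finset V2 := T.filter (fun y' => dist1 dv y' = n) with hT'
    have hsubE : {ω | {d' | (graphOf (dualConfig (addConfig X B ω))).Reachable dv d'}.Infinite}
        ⊆ ⋃ y' ∈ T', {ω | (graphOf (dualConfig (addConfig X B ω))).Reachable dv y'} := by
      intro ω hω
      have hball : {y : V2 | dist1 dv y ≤ n}.Finite := by
        refine (Set.finite_Icc ((dv.1 - n, dv.2 - n) : V2) ((dv.1 + n, dv.2 + n) : V2)).subset ?_
        intro y hy
        simp only [Set.mem_setOf_eq] at hy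
        unfold dist1 at hy
        rw [Set.mem_Icc, Prod.le_def, Prod.le_def]
        dsimp only
        omega
      obtain ⟨y, hyreach, hyfar⟩ :
          ∃ y, (graphOf (dualConfig (addConfig X B ω))).Reachable dv y ∧ ¬ (dist1 dv y ≤ n) := by
        by_contra hcon
        push_neg at hcon
        exact hω (hball.subset (fun y hy => hcon y hy))
      obtain ⟨wy⟩ := hyreach
      obtain ⟨v, hvsupp, hvd⟩ := exists_dist_eq
        (fun u v (h : (graphOf (dualConfig (addConfig X B ω))).Adj u v) => h.1) wy dv n
        (by rw [dist1_self]; omega) (by omega)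
      refine Set.mem_iUnion₂.2 ⟨v, Finset.mem_filter.2 ⟨?_, hvd⟩, ⟨wy.takeUntil v hvsupp⟩⟩
      rw [Finset.mem_image]
      refine ⟨(v.1 - dv.1, v.2 - dv.2), ?_, by rw [Prod.ext_iff]; dsimp only; omega⟩
      rw [Finset.mem_product]
      unfold dist1 at hvd
      constructor <;> rw [Finset.mem_Icc] <;> dsimp only <;> omega
    calc μ {ω | {d' | (graphOf (dualConfig (addConfig X B ω))).Reachable dv d'}.Infinite}
        ≤ μ (⋃ y' ∈ T', {ω | (graphOf (dualConfig (addConfig X B ω))).Reachable dv y'}) :=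
          measure_mono hsubE
      _ ≤ ∑ y' ∈ T', μ {ω | (graphOf (dualConfig (addConfig X B ω))).Reachable dv y'} :=
          measure_biUnion_finset_le _ _
      _ ≤ ∑ _y' ∈ T', r ^ n :=
          Finset.sum_le_sum (fun y' hy' =>
            pair_bound hB hε hXacyc dv y' n (Finset.mem_filter.1 hy').2)
      _ = T'.card * r ^ n := by rw [Finset.sum_const, nsmul_eq_mul]
      _ ≤ ((((2*n+1) * (2*n+1) : ℕ)) : ℝ≥0∞) * r ^ n := by
          refine mul_le_mul_left (Nat.cast_le.2 ?_) _
          calc T'.card ≤ T.card := Finset.card_filter_le _ _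
            _ ≤ ((Finset.Icc (-(n:ℤ)) (n:ℤ)) ×ˢ (Finset.Icc (-(n:ℤ)) (n:ℤ))).card :=
                Finset.card_image_le
            _ ≤ (2*n+1) * (2*n+1) := by
                rw [Finset.card_product, Int.card_Icc,
                  show ((n:ℤ) + 1 - -(n:ℤ)).toNat = 2*n+1 by omega]
  have h0 := ge_of_tendsto' (tendsto_aux hε) hbound
  exact le_antisymm h0 zero_le

end Prob2

end DualForest

/-- Let `X` be an everywhere percolating subgraph of `ℤ²`, `ε ∈ (0,1)`, and
let `Y = Y(X,ε)` be obtained from `X` by `ε`-Bernoulli addition.  Then almost surely every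
connected component of the dual configuration `Y*` is finite; hence `Y*` is almost surely a
forest consisting of finite trees. -/
theorem dual_is_forest_of_finite_trees
    {Ω : Type} [MeasurableSpace Ω] (μ : Measure Ω) [IsProbabilityMeasure μ]
    (X : Set (Sym2 V2)) (hX : EverywherePercolating X)
    (ε : ℝ) (hε : ε ∈ Set.Ioo (0 : ℝ) 1)
    (B : Sym2 V2 → Ω → Bool) (hB : BernoulliFamily μ ε B) :
    ∀ᵐ ω ∂μ,
      (∀ d : V2, {d' | (graphOf (dualConfig (addConfig X B ω))).Reachable d d'}.Finite) ∧
      (graphOf (dualConfig (addConfig X B ω))).IsAcyclic := by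
  classical
  obtain ⟨hXsub, hXinf⟩ := hX
  have hXacyc := DualForest.dual_acyclic hXinf
  have hae : ∀ᵐ ω ∂μ,
      ∀ d : V2, {d' | (graphOf (dualConfig (addConfig X B ω))).Reachable d d'}.Finite := by
    rw [MeasureTheory.ae_all_iff]
    intro d
    rw [MeasureTheory.ae_iff]
    exact DualForest.comp_null hB hε hXacyc d
  filter_upwards [hae] with ω h1
  refine ⟨h1, DualForest.dual_acyclic (fun x => ?_)⟩
  exact Set.Infinite.mono
    (fun y hy => SimpleGraph.Reachable.mono
      (DualForest.graphOf_mono Set.subset_union_left) hy)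
    (hXinf x)
end
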